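/- arXiv:1001.2225 — 5 statements merged into one kernel-verified Lean document; each statement's English description precedes it below -/
import Mathlib

section
/- Let r > 0, let S_A and S_B be real 2×2 matrices with det S_A = 1 and det S_B = 1 (2×2 symplectic matrices), and let f, g be real 2×2 matrices with g symmetric. Let σ_AB = (S_A ⊕ S_B) γ_TMSS,r (S_A ⊕ S_B)ᵀ and let σ' = (I₂ ⊕ f) σ_AB (I₂ ⊕ f)ᵀ + (0 ⊕ g) be the output covariance matrix, written in 2×2 blocks σ' = [[α', γ'],[γ'ᵀ, β']]. Then σ' satisfies the separability condition det α' + det β' − 2 det γ' ≤ 4 det σ' + 1/4 if and only if 4 det g ≥ (det f + 1)². -/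
open Matrix

/-- Direct sum of two real 2×2 matrices, as a 4×4 (block) matrix. -/
noncomputable def dsum (A B : Matrix (Fin 2) (Fin 2) ℝ) :
    Matrix (Fin 2 ⊕ Fin 2) (Fin 2 ⊕ Fin 2) ℝ :=
  Matrix.fromBlocks A 0 0 B

/-- The Pauli-z matrix σ_z = diag(1, -1). -/
noncomputable def sigmaZ : Matrix (Fin 2) (Fin 2) ℝ := !![1, 0; 0, -1]

/-- Covariance matrix of the two-mode squeezed state with squeezing `r`. -/
noncomputable def tmss (r : ℝ) : Matrix (Fin 2 ⊕ Fin 2) (Fin 2 ⊕ Fin 2) ℝ :=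
  (1/2 : ℝ) • Matrix.fromBlocks
    (Real.cosh r • (1 : Matrix (Fin 2) (Fin 2) ℝ)) (Real.sinh r • sigmaZ)
    (Real.sinh r • sigmaZ) (Real.cosh r • (1 : Matrix (Fin 2) (Fin 2) ℝ))

/-- Separability condition det α + det β − 2 det γ ≤ 4 det σ + 1/4
for a 4×4 covariance matrix σ with blocks [[α, γ],[γᵀ, β]]. -/
def sepCond (σ : Matrix (Fin 2 ⊕ Fin 2) (Fin 2 ⊕ Fin 2) ℝ) : Prop :=
  (σ.toBlocks₁₁).det + (σ.toBlocks₂₂).det - 2 * (σ.toBlocks₁₂).det ≤ 4 * σ.det + 1/4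

lemma sigmaZ_mul_self : sigmaZ * sigmaZ = 1 := by
  ext i j; fin_cases i <;> fin_cases j <;>
    simp [sigmaZ, Matrix.mul_apply, Fin.sum_univ_two, Matrix.one_apply]

lemma sigmaZ_det : sigmaZ.det = -1 := by
  simp [sigmaZ, Matrix.det_fin_two_of]

lemma detSmulAdd (x : ℝ) (M N : Matrix (Fin 2) (Fin 2) ℝ) :
    (x • M + N).det = x^2 * M.det
      + x * (M 0 0 * N 1 1 + N 0 0 * M 1 1 - M 0 1 * N 1 0 - N 0 1 * M 1 0) + N.det := by
  simp [Matrix.det_fin_two]; ring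

theorem stmt0 (r : ℝ) (hr : 0 < r)
    (SA SB f g : Matrix (Fin 2) (Fin 2) ℝ)
    (hSA : SA.det = 1) (hSB : SB.det = 1) (hg : g.IsSymm) :
    sepCond (dsum 1 f * (dsum SA SB * tmss r * (dsum SA SB)ᵀ) * (dsum 1 f)ᵀ + dsum 0 g)
      ↔ 4 * g.det ≥ (f.det + 1) ^ 2 := by
  set c := Real.cosh r with hc
  set s := Real.sinh r with hsdef
  have hs : 0 < s := Real.sinh_pos_iff.mpr hr
  have hcpos : 0 < c := Real.cosh_pos r
  have hc2 : c^2 - s^2 = 1 := Real.cosh_sq_sub_sinh_sq r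
  set M : Matrix (Fin 2) (Fin 2) ℝ := f * (SB * SBᵀ) * fᵀ with hM
  have hMdet : M.det = f.det ^ 2 := by
    simp [hM, Matrix.det_mul, hSB, Matrix.det_transpose]; ring
  -- block decomposition of the output covariance matrix
  have hσ : dsum 1 f * (dsum SA SB * tmss r * (dsum SA SB)ᵀ) * (dsum 1 f)ᵀ + dsum 0 g =
      Matrix.fromBlocks ((1/2*c) • (SA * SAᵀ))
        ((1/2*s) • (SA * sigmaZ * SBᵀ * fᵀ))
        ((1/2*s) • (f * (SB * sigmaZ * SAᵀ)))
        ((1/2*c) • M + g) := by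
    simp only [dsum, tmss, hM, Matrix.fromBlocks_transpose, Matrix.transpose_one,
      Matrix.transpose_zero, Matrix.smul_mul, Matrix.mul_smul, Matrix.fromBlocks_smul,
      Matrix.fromBlocks_multiply, Matrix.fromBlocks_add, Matrix.one_mul, Matrix.mul_one,
      Matrix.zero_mul, Matrix.mul_zero, add_zero, zero_add, smul_smul, smul_zero]
    rfl
  rw [hσ]
  -- invertibility of the ₁₁ block
  have hαdet : ((1/2*c) • (SA * SAᵀ)).det = c^2/4 := by
    simp [Matrix.det_smul, Matrix.det_mul, hSA, Matrix.det_transpose]; ring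
  haveI : Invertible SA := SA.invertibleOfIsUnitDet (by rw [hSA]; exact isUnit_one)
  haveI : Invertible ((1/2*c) • (SA * SAᵀ)) :=
    Matrix.invertibleOfIsUnitDet _ (by rw [hαdet]; exact (isUnit_iff_ne_zero.mpr (by positivity)))
  have hinv : ⅟((1/2*c) • (SA * SAᵀ)) = (2/c) • ((⅟SA)ᵀ * ⅟SA) := by
    apply invOf_eq_right_inv
    rw [Matrix.mul_smul, Matrix.smul_mul, smul_smul]
    have h1 : SA * SAᵀ * ((⅟SA)ᵀ * ⅟SA) = 1 := by
      rw [← Matrix.mul_assoc, Matrix.mul_assoc SA, ← Matrix.transpose_mul]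
      simp
    rw [h1, show (2/c)*(1/2*c) = 1 by field_simp]
    simp
  -- determinant of the full matrix via Schur complement
  have h2 : f * (SB * sigmaZ * SAᵀ) * ((⅟SA)ᵀ * ⅟SA) * (SA * sigmaZ * SBᵀ * fᵀ) = M := by
    rw [hM]
    have hsa : SAᵀ * ((⅟SA)ᵀ * ⅟SA) * SA = 1 := by
      rw [← Matrix.mul_assoc, ← Matrix.transpose_mul, Matrix.mul_assoc]
      simp
    calc f * (SB * sigmaZ * SAᵀ) * ((⅟SA)ᵀ * ⅟SA) * (SA * sigmaZ * SBᵀ * fᵀ)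
        = f * (SB * (sigmaZ * (SAᵀ * ((⅟SA)ᵀ * ⅟SA) * SA) * sigmaZ) * SBᵀ) * fᵀ := by
          simp only [Matrix.mul_assoc]
      _ = f * (SB * SBᵀ) * fᵀ := by rw [hsa]; simp [sigmaZ_mul_self, Matrix.mul_assoc]
  have hSchur : ((1/2*c) • M + g) - ((1/2*s) • (f * (SB * sigmaZ * SAᵀ))) *
      ⅟((1/2*c) • (SA * SAᵀ)) * ((1/2*s) • (SA * sigmaZ * SBᵀ * fᵀ)) =
      (1/(2*c)) • M + g := by
    rw [hinv]
    have h5 : ((1/2*s) • (f * (SB * sigmaZ * SAᵀ))) * ((2/c) • ((⅟SA)ᵀ * ⅟SA)) *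
        ((1/2*s) • (SA * sigmaZ * SBᵀ * fᵀ)) = (s^2/(2*c)) • M := by
      simp only [Matrix.smul_mul, Matrix.mul_smul, smul_smul]
      rw [h2]
      congr 1
      field_simp
    rw [h5, show (1/(2*c) : ℝ) = 1/2*c - s^2/(2*c) by field_simp; linear_combination (-1)*hc2]
    rw [sub_smul]
    abel
  rw [sepCond, Matrix.det_fromBlocks₁₁, hSchur]
  simp only [Matrix.toBlocks_fromBlocks₁₁, Matrix.toBlocks_fromBlocks₁₂, Matrix.toBlocks_fromBlocks₂₂]
  -- determinants of the blocks
  have hγdet : ((1/2*s) • (SA * sigmaZ * SBᵀ * fᵀ)).det = -(s^2/4) * f.det := by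
    simp [Matrix.det_smul, Matrix.det_mul, hSA, hSB, sigmaZ_det, Matrix.det_transpose]
    ring_nf
    try exact Or.inl trivial
  rw [hαdet, hγdet, detSmulAdd, detSmulAdd, hMdet]
  set t := f.det
  set u := g.det
  set k := M 0 0 * g 1 1 + g 0 0 * M 1 1 - M 0 1 * g 1 0 - g 0 1 * M 1 0
  have hc0 : c ≠ 0 := ne_of_gt hcpos
  have e1 : c^2/4 * ((1/(2*c))^2 * t^2 + (1/(2*c)) * k + u) = t^2/16 + c*k/8 + c^2*u/4 := by
    field_simp; ring
  have key : (4 * (c^2/4 * ((1/(2*c))^2 * t^2 + (1/(2*c)) * k + u)) + 1/4)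
      - (c^2/4 + ((1/2*c)^2 * t^2 + (1/2*c) * k + u) - 2 * (-(s^2/4) * t))
      = s^2/4 * (4*u - (t+1)^2) := by
    rw [e1]; linear_combination (u - t^2/4 - 1/4) * hc2
  have h4 : 0 < s^2/4 := by positivity
  clear_value t u k
  clear e1 hσ hinv h2 hSchur hαdet hγdet hMdet hM
  constructor
  · intro h
    by_contra hE'
    push_neg at hE'
    nlinarith [mul_pos h4 (by linarith : (0:ℝ) < (t+1)^2 - 4*u)]
  · intro h
    have hE : 0 ≤ s^2/4 * (4*u - (t+1)^2) := mul_nonneg h4.le (by linarith)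
    linarith
end

section
/- Let r > 0, let M be an arbitrary real 2×2 matrix, and let g be a real symmetric 2×2 matrix. Let σ' = (I₂ ⊕ M) γ_TMSS,r (I₂ ⊕ M)ᵀ + (0 ⊕ g), written in 2×2 blocks σ' = [[α', γ'],[γ'ᵀ, β']]. Then σ' satisfies the separability condition det α' + det β' − 2 det γ' ≤ 4 det σ' + 1/4 if and only if 4 det g ≥ (det M + 1)². -/
open Matrix

/-- Physicality (Robertson–Schrödinger) condition det α + det β + 2 det γ ≤ 4 det σ + 1/4
for a 4×4 covariance matrix σ with blocks [[α, γ],[γᵀ, β]]. -/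
def physCond (σ : Matrix (Fin 2 ⊕ Fin 2) (Fin 2 ⊕ Fin 2) ℝ) : Prop :=
  (σ.toBlocks₁₁).det + (σ.toBlocks₂₂).det + 2 * (σ.toBlocks₁₂).det ≤ 4 * σ.det + 1/4

set_option maxHeartbeats 1000000 in
private lemma det4_aux (a b c d e f g h i j k l m n o p : ℝ) :
    (Matrix.fromBlocks !![a,b;c,d] !![e,f;g,h] !![i,j;k,l] !![m,n;o,p]).det =
      a*d*m*p - a*d*n*o - a*m*l*h - a*p*g*j + a*n*g*l + a*o*j*h
      - d*m*k*f - d*p*i*e + d*n*k*e + d*o*i*f - m*p*b*c + m*l*c*f + m*h*b*k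
      + p*g*b*i + p*j*c*e + n*o*b*c - n*g*b*k - n*l*c*e - o*j*c*f - o*h*b*i
      + g*j*k*f - g*l*i*f - j*h*k*e + l*h*i*e := by
  rw [← det_submatrix_equiv_self finSumFinEquiv.symm]
  have h4 : (Matrix.fromBlocks !![a,b;c,d] !![e,f;g,h] !![i,j;k,l] !![m,n;o,p]).submatrix
      finSumFinEquiv.symm finSumFinEquiv.symm = !![a,b,e,f; c,d,g,h; i,j,m,n; k,l,o,p] := by
    ext i j
    fin_cases i <;> fin_cases j <;> rfl
  rw [h4]
  simp [Matrix.det_succ_row_zero, Fin.sum_univ_succ, Fin.succAbove]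
  ring

set_option maxHeartbeats 1000000 in
theorem stmt2 (r : ℝ) (hr : 0 < r) (M g : Matrix (Fin 2) (Fin 2) ℝ) (hg : g.IsSymm) :
    sepCond (dsum 1 M * tmss r * (dsum 1 M)ᵀ + dsum 0 g) ↔ 4 * g.det ≥ (M.det + 1) ^ 2 := by
  set ch := Real.cosh r with hch
  set sh := Real.sinh r with hsh
  have hs : 0 < sh := Real.sinh_pos_iff.2 hr
  have hid : ch ^ 2 - sh ^ 2 = 1 := Real.cosh_sq_sub_sinh_sq r
  have hq : g 1 0 = g 0 1 := by
    conv_lhs => rw [← hg]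
    rfl
  have hσ : dsum 1 M * tmss r * (dsum 1 M)ᵀ + dsum 0 g =
      Matrix.fromBlocks !![ch/2, 0; 0, ch/2]
        !![sh/2 * M 0 0, sh/2 * M 1 0; -(sh/2) * M 0 1, -(sh/2) * M 1 1]
        !![sh/2 * M 0 0, -(sh/2) * M 0 1; sh/2 * M 1 0, -(sh/2) * M 1 1]
        !![ch/2 * (M 0 0 ^ 2 + M 0 1 ^ 2) + g 0 0, ch/2 * (M 0 0 * M 1 0 + M 0 1 * M 1 1) + g 0 1;
           ch/2 * (M 0 0 * M 1 0 + M 0 1 * M 1 1) + g 1 0, ch/2 * (M 1 0 ^ 2 + M 1 1 ^ 2) + g 1 1] := by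
    ext i j
    rcases i with i | i <;> rcases j with j | j <;> fin_cases i <;> fin_cases j <;>
      simp [dsum, tmss, sigmaZ, Matrix.mul_apply, Matrix.fromBlocks, Fin.sum_univ_succ,
        Matrix.one_apply] <;>
      (first | ring1 | (left; first | ring1 | trivial))
  rw [show sepCond (dsum 1 M * tmss r * (dsum 1 M)ᵀ + dsum 0 g) ↔ _ from Iff.rfl, sepCond, hσ]
  rw [Matrix.toBlocks_fromBlocks₁₁, Matrix.toBlocks_fromBlocks₁₂, Matrix.toBlocks_fromBlocks₂₂,
    det4_aux, Matrix.det_fin_two_of, Matrix.det_fin_two_of, Matrix.det_fin_two_of,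
    Matrix.det_fin_two M, Matrix.det_fin_two g, hq]
  have hz : ch ^ 2 - sh ^ 2 - 1 = 0 := by linarith
  have f1 : (ch ^ 2 - sh ^ 2 - 1) * (g 0 0 * g 1 1 - g 0 1 * g 0 1) = 0 := mul_eq_zero_of_left hz _
  have f2 : (ch ^ 2 - sh ^ 2 - 1) * (sh ^ 2 * (M 0 0 * M 1 1 - M 0 1 * M 1 0) ^ 2) = 0 :=
    mul_eq_zero_of_left hz _
  have f3 : (ch ^ 2 - sh ^ 2 - 1) * (ch * (g 0 0 * (M 1 0 ^ 2 + M 1 1 ^ 2)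
      + g 1 1 * (M 0 0 ^ 2 + M 0 1 ^ 2) - 2 * g 0 1 * (M 0 0 * M 1 0 + M 0 1 * M 1 1))) = 0 :=
    mul_eq_zero_of_left hz _
  have f4 : (ch ^ 2 - sh ^ 2 - 1) * (ch ^ 2 * (M 0 0 * M 1 1 - M 0 1 * M 1 0) ^ 2) = 0 :=
    mul_eq_zero_of_left hz _
  constructor <;> intro h <;>
    nlinarith [hz, f1, f2, f3, f4, hs, mul_pos hs hs, sq_nonneg sh, h]
end

section
/- Let r > 0, let M be a real 2×2 matrix with det M = 0, and let g be a real symmetric 2×2 matrix with 4 det g ≥ 1. Then the output matrix σ' = (I₂ ⊕ M) γ_TMSS,r (I₂ ⊕ M)ᵀ + (0 ⊕ g), with 2×2 blocks [[α', γ'],[γ'ᵀ, β']], satisfies the separability condition det α' + det β' − 2 det γ' ≤ 4 det σ' + 1/4. In other words, a one-sided Gaussian channel whose matrix f satisfies det f = 0 (for which the channel physicality condition 4 det g ≥ (det f − 1)² reads 4 det g ≥ 1) outputs only separable states. -/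
open Matrix

lemma my_det_fin_four (A : Matrix (Fin 4) (Fin 4) ℝ) :
    A.det = A 0 0*A 1 1*A 2 2*A 3 3 - A 0 0*A 1 1*A 2 3*A 3 2 - A 0 0*A 1 2*A 2 1*A 3 3 + A 0 0*A 1 2*A 2 3*A 3 1 + A 0 0*A 1 3*A 2 1*A 3 2 - A 0 0*A 1 3*A 2 2*A 3 1 - A 0 1*A 1 0*A 2 2*A 3 3 + A 0 1*A 1 0*A 2 3*A 3 2 + A 0 1*A 1 2*A 2 0*A 3 3 - A 0 1*A 1 2*A 2 3*A 3 0 - A 0 1*A 1 3*A 2 0*A 3 2 + A 0 1*A 1 3*A 2 2*A 3 0 + A 0 2*A 1 0*A 2 1*A 3 3 - A 0 2*A 1 0*A 2 3*A 3 1 - A 0 2*A 1 1*A 2 0*A 3 3 + A 0 2*A 1 1*A 2 3*A 3 0 + A 0 2*A 1 3*A 2 0*A 3 1 - A 0 2*A 1 3*A 2 1*A 3 0 - A 0 3*A 1 0*A 2 1*A 3 2 + A 0 3*A 1 0*A 2 2*A 3 1 + A 0 3*A 1 1*A 2 0*A 3 2 - A 0 3*A 1 1*A 2 2*A 3 0 -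 A 0 3*A 1 2*A 2 0*A 3 1 + A 0 3*A 1 2*A 2 1*A 3 0 := by
  simp [Matrix.det_succ_row_zero, Fin.sum_univ_succ, Fin.succAbove,
    show (Fin.succ 2 : Fin 4) = 3 from rfl, show (Fin.castSucc 2 : Fin 4) = 2 from rfl,
    show (Fin.succ 1 : Fin 4) = 2 from rfl, show (Fin.succ 0 : Fin 4) = 1 from rfl]
  ring

set_option maxHeartbeats 1000000 in
set_option maxRecDepth 2000 in
theorem stmt7 (r : ℝ) (hr : 0 < r) (M g : Matrix (Fin 2) (Fin 2) ℝ)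
    (hM : M.det = 0) (hg : g.IsSymm) (hgdet : 4 * g.det ≥ 1) :
    sepCond (dsum 1 M * tmss r * (dsum 1 M)ᵀ + dsum 0 g) := by
  have hsym : g 1 0 = g 0 1 := hg.apply 0 1
  rw [Matrix.det_fin_two] at hM
  have hgdet' : 4 * (g 0 0 * g 1 1 - g 0 1 * g 1 0) ≥ 1 := by
    rw [Matrix.det_fin_two] at hgdet; exact hgdet
  set c := Real.cosh r with hc
  set s := Real.sinh r with hs
  have hcs : c ^ 2 - s ^ 2 - 1 = 0 := by
    have := Real.cosh_sq_sub_sinh_sq r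
    rw [hc, hs]; nlinarith [this]
  have hc1 : 1 ≤ c := Real.one_le_cosh r
  have h1 : (-(s^2)/2 + (-(s^4)/4 + c^2/4 + c^2*s^2/2 - c^4/4) * (M 0 1 * M 1 0) + (s^4/4 - c^2/4 - c^2*s^2/2 + c^4/4) * (M 0 0 * M 1 1)) * (M 0 0 * M 1 1 - M 0 1 * M 1 0) = 0 := by
    rw [hM, mul_zero]
  have h2 : (c*(M 1 1)^2*(g 0 0)/2 + c*(M 1 0)^2*(g 0 0)/2 - c*(M 0 1)*(M 1 1)*(g 0 1) + c*(M 0 1)^2*(g 1 1)/2 - c*(M 0 0)*(M 1 0)*(g 0 1) + c*(M 0 0)^2*(g 1 1)/2) * (c^2 - s^2 - 1) = 0 := by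
    rw [hcs, mul_zero]
  have h3 : (4 * (g 0 0 * g 1 1 - g 0 1 * g 0 1) - 1) * (c^2 - 1) ≥ 0 := by
    apply mul_nonneg
    · rw [hsym] at hgdet'; linarith
    · nlinarith [hc1]
  have hσ : dsum 1 M * tmss r * (dsum 1 M)ᵀ + dsum 0 g = Matrix.fromBlocks
      !![c/2, 0; 0, c/2]
      !![s/2*M 0 0, s/2*M 1 0; -(s/2*M 0 1), -(s/2*M 1 1)]
      !![s/2*M 0 0, -(s/2*M 0 1); s/2*M 1 0, -(s/2*M 1 1)]
      !![c/2*(M 0 0^2+M 0 1^2)+g 0 0, c/2*(M 0 0*M 1 0+M 0 1*M 1 1)+g 0 1;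
         c/2*(M 1 0*M 0 0+M 1 1*M 0 1)+g 1 0, c/2*(M 1 0^2+M 1 1^2)+g 1 1] := by
    ext i j
    rcases i with i|i <;> rcases j with j|j <;> fin_cases i <;> fin_cases j
    all_goals try simp [dsum, tmss, sigmaZ, Matrix.mul_apply, Fintype.sum_sum_type,
      Fin.sum_univ_succ, Matrix.fromBlocks, Matrix.one_apply]
    all_goals try exact Or.inl (by ring)
    all_goals ring
  have f0 : (finSumFinEquiv.symm (0 : Fin 4) : Fin 2 ⊕ Fin 2) = Sum.inl (0 : Fin 2) := rfl
  have f1 : (finSumFinEquiv.symm (1 : Fin 4) : Fin 2 ⊕ Fin 2) = Sum.inl (1 : Fin 2) := rfl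
  have f2 : (finSumFinEquiv.symm (2 : Fin 4) : Fin 2 ⊕ Fin 2) = Sum.inr (0 : Fin 2) := rfl
  have f3 : (finSumFinEquiv.symm (3 : Fin 4) : Fin 2 ⊕ Fin 2) = Sum.inr (1 : Fin 2) := rfl
  rw [sepCond, hσ, show (Matrix.fromBlocks _ _ _ _ : Matrix (Fin 2 ⊕ Fin 2) (Fin 2 ⊕ Fin 2) ℝ).det
      = ((Matrix.fromBlocks _ _ _ _ : Matrix (Fin 2 ⊕ Fin 2) (Fin 2 ⊕ Fin 2) ℝ).submatrix
          finSumFinEquiv.symm finSumFinEquiv.symm).det from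
        (Matrix.det_submatrix_equiv_self _ _).symm,
    my_det_fin_four, Matrix.det_fin_two, Matrix.det_fin_two, Matrix.det_fin_two]
  simp only [Matrix.toBlocks_fromBlocks₁₁, Matrix.toBlocks_fromBlocks₁₂,
    Matrix.toBlocks_fromBlocks₂₂, Matrix.submatrix_apply, f0, f1, f2, f3,
    Matrix.fromBlocks_apply₁₁, Matrix.fromBlocks_apply₁₂, Matrix.fromBlocks_apply₂₁,
    Matrix.fromBlocks_apply₂₂, Matrix.cons_val', Matrix.cons_val_zero, Matrix.cons_val_one,
    Matrix.head_cons, Matrix.empty_val', Matrix.cons_val_fin_one, Matrix.head_fin_const,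
    Matrix.of_apply, hsym]
  nlinarith [h1, h2, h3]
end

section
/- Let r > 0, let d be a real number, and let h be a real symmetric 2×2 matrix. Set C = (cosh(r)/2) I₂ and S = (sinh(r)/2) σ_z. Then the inequality det C + d² · det(C + h) − 2 d · det S ≤ 4 d² · det( γ_TMSS,r + (0 ⊕ h) ) + 1/4 holds if and only if 4 d² det h ≥ (d + 1)². (Applied with d = det f and h = (f S_B)⁻¹ g ((f S_B)⁻¹)ᵀ, so that d² det h = det g, this gives the channel separability condition 4 det g ≥ (det f + 1)².) -/
open Matrix

private theorem tmss_det_aux (r : ℝ) (h : Matrix (Fin 2) (Fin 2) ℝ) :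
    (tmss r + dsum 0 h).det =
      (Real.cosh r ^ 2 / 4) *
        ((1 / (2 * Real.cosh r) + h 0 0) * (1 / (2 * Real.cosh r) + h 1 1)
          - h 0 1 * h 1 0) := by
  have hc : Real.cosh r ≠ 0 := (Real.cosh_pos r).ne'
  have hc2 : (Real.cosh r / 2 : ℝ) ≠ 0 := by positivity
  letI : Invertible ((Real.cosh r / 2) • (1 : Matrix (Fin 2) (Fin 2) ℝ)) :=
    ⟨(Real.cosh r / 2)⁻¹ • 1, by
      rw [smul_mul_smul_comm, one_mul, inv_mul_cancel₀ hc2, one_smul], by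
      rw [smul_mul_smul_comm, one_mul, mul_inv_cancel₀ hc2, one_smul]⟩
  have key : tmss r + dsum 0 h =
      Matrix.fromBlocks ((Real.cosh r / 2) • 1) ((Real.sinh r / 2) • sigmaZ)
        ((Real.sinh r / 2) • sigmaZ) ((Real.cosh r / 2) • 1 + h) := by
    unfold tmss dsum
    rw [Matrix.fromBlocks_smul, Matrix.fromBlocks_add]
    congr 1 <;> simp [smul_smul] <;> rw [div_eq_inv_mul]
  rw [key, Matrix.det_fromBlocks₁₁]
  have hinv : ⅟((Real.cosh r / 2) • (1 : Matrix (Fin 2) (Fin 2) ℝ))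
      = (Real.cosh r / 2)⁻¹ • 1 := rfl
  rw [hinv]
  simp only [Matrix.det_fin_two, Matrix.sub_apply, Matrix.add_apply, Matrix.smul_apply,
    Matrix.mul_apply, Fin.sum_univ_two, Matrix.one_apply, sigmaZ,
    Matrix.cons_val', Matrix.cons_val_zero, Matrix.cons_val_one, Matrix.head_cons,
    Matrix.head_fin_const, Matrix.empty_val', Matrix.cons_val_fin_one, smul_eq_mul]
  norm_num
  field_simp
  linear_combination (64 * Real.cosh r ^ 4 * (Real.cosh r ^ 2 - Real.sinh r ^ 2 + 1)
    + 128 * Real.cosh r ^ 5 * (h 0 0 + h 1 1)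
    + (64) * Real.cosh r ^ 4 * Real.sinh r ^ 2 + (-4) * Real.sinh r ^ 2 + (8) * Real.cosh r * h 0 0 + (8) * Real.cosh r * h 1 1 + (4) * Real.cosh r ^ 2 + (-128) * Real.cosh r ^ 5 * h 0 0 + (-128) * Real.cosh r ^ 5 * h 1 1 + (-64) * Real.cosh r ^ 6 + (-64) * Real.cosh r ^ 4 + (4)) * Real.cosh_sq_sub_sinh_sq r

private theorem key_aux (r d a b b' c : ℝ) (hc : Real.cosh r ≠ 0)
    (hC : Real.cosh r ^ 2 = Real.sinh r ^ 2 + 1) :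
    4 * d ^ 2 * (Real.cosh r ^ 2 / 4 *
        ((1 / (2 * Real.cosh r) + a) * (1 / (2 * Real.cosh r) + c) - b * b')) + 1 / 4 -
      ((Real.cosh r / 2) ^ 2 + d ^ 2 * ((Real.cosh r / 2 + a) * (Real.cosh r / 2 + c) - b * b') -
        2 * d * -(Real.sinh r / 2) ^ 2)
    = Real.sinh r ^ 2 / 4 * (4 * d ^ 2 * (a * c - b * b') - (d + 1) ^ 2) := by
  field_simp
  linear_combination (4096 * Real.cosh r ^ 2 * (4 * d ^ 2 * (a * c - b * b') - d ^ 2 - 1)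
    + (-16384) * Real.cosh r ^ 2 * d ^ 2 * a * c + (16384) * Real.cosh r ^ 2 * d ^ 2 * b * b' + (4096) * Real.cosh r ^ 2 * d ^ 2 + (16) * d ^ 2 * a * c + (-16) * d ^ 2 * b * b' + (-4) * d ^ 2 + (4096) * Real.cosh r ^ 2 + (-4)) * hC

theorem stmt8 (r : ℝ) (hr : 0 < r) (d : ℝ) (h : Matrix (Fin 2) (Fin 2) ℝ) (hh : h.IsSymm) :
    ((Real.cosh r / 2) • (1 : Matrix (Fin 2) (Fin 2) ℝ)).det +
        d ^ 2 * ((Real.cosh r / 2) • (1 : Matrix (Fin 2) (Fin 2) ℝ) + h).det -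
        2 * d * ((Real.sinh r / 2) • sigmaZ).det ≤
      4 * d ^ 2 * (tmss r + dsum 0 h).det + 1/4
    ↔ 4 * d ^ 2 * h.det ≥ (d + 1) ^ 2 := by
  rw [tmss_det_aux r h]
  have h1 : ((Real.cosh r / 2) • (1 : Matrix (Fin 2) (Fin 2) ℝ)).det
      = (Real.cosh r / 2) ^ 2 := by
    simp [Matrix.det_fin_two, Matrix.smul_apply, Matrix.one_apply]
  have h2 : ((Real.cosh r / 2) • (1 : Matrix (Fin 2) (Fin 2) ℝ) + h).det
      = (Real.cosh r / 2 + h 0 0) * (Real.cosh r / 2 + h 1 1) - h 0 1 * h 1 0 := by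
    simp [Matrix.det_fin_two, Matrix.add_apply, Matrix.smul_apply, Matrix.one_apply]
  have h3 : ((Real.sinh r / 2) • sigmaZ).det = -(Real.sinh r / 2) ^ 2 := by
    simp [Matrix.det_fin_two, Matrix.smul_apply, sigmaZ]
    ring
  have h4 : h.det = h 0 0 * h 1 1 - h 0 1 * h 1 0 := Matrix.det_fin_two h
  rw [h1, h2, h3, h4, ge_iff_le]
  have hS : 0 < Real.sinh r := Real.sinh_pos_iff.mpr hr
  have hc : Real.cosh r ≠ 0 := (Real.cosh_pos r).ne'
  have hC : Real.cosh r ^ 2 = Real.sinh r ^ 2 + 1 := Real.cosh_sq r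
  have hkey := key_aux r d (h 0 0) (h 0 1) (h 1 0) (h 1 1) hc hC
  have hpos : 0 < Real.sinh r ^ 2 / 4 := by positivity
  constructor
  · intro H
    have h5 : 0 ≤ Real.sinh r ^ 2 / 4 *
        (4 * d ^ 2 * (h 0 0 * h 1 1 - h 0 1 * h 1 0) - (d + 1) ^ 2) := by linarith
    nlinarith [(mul_nonneg_iff_of_pos_left hpos).mp h5]
  · intro H
    have h5 : 0 ≤ Real.sinh r ^ 2 / 4 *
        (4 * d ^ 2 * (h 0 0 * h 1 1 - h 0 1 * h 1 0) - (d + 1) ^ 2) :=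
      mul_nonneg hpos.le (by linarith)
    linarith
end

section
/- Let r > 0, let f be an invertible real 2×2 matrix, let S_B be a real 2×2 matrix with det S_B = 1, and let g be a real symmetric 2×2 matrix. Set h = (f S_B)⁻¹ g ((f S_B)⁻¹)ᵀ, C = (cosh(r)/2) I₂ and S = (sinh(r)/2) σ_z. Then h is symmetric, det g = (det f)² det h, and the output matrix σ' = (I₂ ⊕ f S_B) γ_TMSS,r (I₂ ⊕ f S_B)ᵀ + (0 ⊕ g), with blocks [[α', γ'],[γ'ᵀ, β']], satisfies det α' + det β' − 2 det γ' ≤ 4 det σ' + 1/4 if and only if det C + (det f)² det(C + h) − 2 (det f) det S ≤ 4 (det f)² det( γ_TMSS,r + (0 ⊕ h) ) + 1/4. -/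
open Matrix

theorem stmt11 (r : ℝ) (hr : 0 < r)
    (f SB g : Matrix (Fin 2) (Fin 2) ℝ) (hf : f.det ≠ 0) (hSB : SB.det = 1) (hg : g.IsSymm) :
    ((f * SB)⁻¹ * g * ((f * SB)⁻¹)ᵀ).IsSymm ∧
    g.det = f.det ^ 2 * ((f * SB)⁻¹ * g * ((f * SB)⁻¹)ᵀ).det ∧
    (sepCond (dsum 1 (f * SB) * tmss r * (dsum 1 (f * SB))ᵀ + dsum 0 g) ↔
      ((Real.cosh r / 2) • (1 : Matrix (Fin 2) (Fin 2) ℝ)).det +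
          f.det ^ 2 * ((Real.cosh r / 2) • (1 : Matrix (Fin 2) (Fin 2) ℝ)
            + (f * SB)⁻¹ * g * ((f * SB)⁻¹)ᵀ).det -
          2 * f.det * ((Real.sinh r / 2) • sigmaZ).det ≤
        4 * f.det ^ 2 * (tmss r + dsum 0 ((f * SB)⁻¹ * g * ((f * SB)⁻¹)ᵀ)).det + 1/4) := by
  set F := f * SB with hF
  have hFdet : F.det = f.det := by rw [hF, Matrix.det_mul, hSB, mul_one]
  have hFdet0 : F.det ≠ 0 := by rw [hFdet]; exact hf
  have hFinv : F * F⁻¹ = 1 := Matrix.mul_nonsing_inv F hFdet0.isUnit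
  have hFinv' : F⁻¹ * F = 1 := Matrix.nonsing_inv_mul F hFdet0.isUnit
  set h := F⁻¹ * g * F⁻¹ᵀ with hh
  have hsymm : h.IsSymm := by
    unfold Matrix.IsSymm
    rw [hh, Matrix.transpose_mul, Matrix.transpose_mul, Matrix.transpose_transpose,
      hg.eq, Matrix.mul_assoc]
  have hdetinv : F⁻¹.det = (F.det)⁻¹ := by rw [Matrix.det_nonsing_inv, Ring.inverse_eq_inv']
  have hdeth : g.det = f.det ^ 2 * h.det := by
    rw [hh, Matrix.det_mul, Matrix.det_mul, Matrix.det_transpose, hdetinv, hFdet]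
    field_simp
  refine ⟨hsymm, hdeth, ?_⟩
  -- key conjugation identity
  have hFg : F * h * Fᵀ = g := by
    have : F⁻¹ᵀ * Fᵀ = 1 := by
      rw [← Matrix.transpose_mul, hFinv, Matrix.transpose_one]
    calc F * (F⁻¹ * g * F⁻¹ᵀ) * Fᵀ
        = (F * F⁻¹) * g * (F⁻¹ᵀ * Fᵀ) := by noncomm_ring
      _ = g := by rw [hFinv, this, Matrix.one_mul, Matrix.mul_one]
  set C := (Real.cosh r / 2) • (1 : Matrix (Fin 2) (Fin 2) ℝ) with hC
  set S := (Real.sinh r / 2) • sigmaZ with hS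
  have htmss : tmss r = Matrix.fromBlocks C S S C := by
    rw [tmss, Matrix.fromBlocks_smul, hC, hS, smul_smul, smul_smul]
    norm_num [div_eq_mul_inv, mul_comm]
  -- the transformed covariance matrix as explicit blocks
  have hσ : dsum 1 F * tmss r * (dsum 1 F)ᵀ + dsum 0 g =
      Matrix.fromBlocks C (S * Fᵀ) (F * S) (F * C * Fᵀ + g) := by
    simp only [dsum]
    rw [htmss, Matrix.fromBlocks_transpose, Matrix.fromBlocks_multiply,
      Matrix.fromBlocks_multiply, Matrix.fromBlocks_add]
    congr 1 <;> simp
  -- factorization for the determinant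
  have hσ2 : dsum 1 F * tmss r * (dsum 1 F)ᵀ + dsum 0 g =
      dsum 1 F * (tmss r + dsum 0 h) * (dsum 1 F)ᵀ := by
    rw [Matrix.mul_add, Matrix.add_mul]
    congr 1
    simp only [dsum]
    rw [Matrix.fromBlocks_transpose, Matrix.fromBlocks_multiply, Matrix.fromBlocks_multiply]
    simp [Matrix.mul_assoc, hFg]
  have hdsumdet : (dsum 1 F).det = f.det := by
    rw [dsum, Matrix.det_fromBlocks_zero₂₁, Matrix.det_one, one_mul, hFdet]
  have hdetσ : (dsum 1 F * tmss r * (dsum 1 F)ᵀ + dsum 0 g).det =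
      f.det ^ 2 * (tmss r + dsum 0 h).det := by
    rw [hσ2, Matrix.det_mul, Matrix.det_mul, Matrix.det_transpose, hdsumdet]
    ring
  have hβ : (F * C * Fᵀ + g).det = f.det ^ 2 * (C + h).det := by
    have : F * (C + h) * Fᵀ = F * C * Fᵀ + g := by
      rw [Matrix.mul_add, Matrix.add_mul, hFg]
    rw [← this, Matrix.det_mul, Matrix.det_mul, Matrix.det_transpose, hFdet]
    ring
  have hγ : (S * Fᵀ).det = S.det * f.det := by
    rw [Matrix.det_mul, Matrix.det_transpose, hFdet]
  rw [sepCond, hdetσ, hσ, Matrix.toBlocks_fromBlocks₁₁, Matrix.toBlocks_fromBlocks₂₂,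
    Matrix.toBlocks_fromBlocks₁₂, hβ, hγ]
  constructor <;> intro H <;> linarith
end
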